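/- Let d ≥ 1, let Ω ⊆ ℝ^d be a bounded measurable set, let ρ : ℝ^d → ℝ be a nonnegative integrable function with associated measure π(A) = ∫_A ρ(x) dx, let dist : ℝ^d × ℝ^d → ℝ be a continuous nonnegative function, let y_1, …, y_K ∈ ℝ^d, and let c ∈ ℝ^K. Define F(w) = ∫_Ω min_{j=1,…,K}(dist(x,y_j) − w_j) ρ(x) dx + Σ_k w_k c_k and the tie-broken power cells V_k(w) = {x ∈ Ω : dist(x,y_k) − w_k ≤ dist(x,y_j) − w_j for all j, with strict inequality for all j < k}. Suppose w ∈ ℝ^K satisfies the capacity constraints π(V_k(w)) = c_k for every k = 1, …, K. Then w is a global maximizer of F, i.e. F(w') ≤ F(w) for all w' ∈ ℝ^K. -/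

import Mathlib

open MeasureTheory

/-- The tie-broken power cell of the generator `y k` with weight `w k` in `Ω`: points of `Ω`
where `dst x (y k) - w k` is minimal among all generators, with ties assigned to the
smallest index. -/
def powerCell {d K : ℕ} (Ω : Set (EuclideanSpace ℝ (Fin d)))
    (dst : EuclideanSpace ℝ (Fin d) → EuclideanSpace ℝ (Fin d) → ℝ)
    (y : Fin K → EuclideanSpace ℝ (Fin d)) (w : Fin K → ℝ) (k : Fin K) :
    Set (EuclideanSpace ℝ (Fin d)) :=
  {x ∈ Ω | (∀ j, dst x (y k) - w k ≤ dst x (y j) - w j) ∧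
    ∀ j, j < k → dst x (y k) - w k < dst x (y j) - w j}

theorem stmt_17 (d K : ℕ) (hd : 1 ≤ d) (hK : 0 < K)
    (Ω : Set (EuclideanSpace ℝ (Fin d)))
    (hΩb : Bornology.IsBounded Ω) (hΩm : MeasurableSet Ω)
    (ρ : EuclideanSpace ℝ (Fin d) → ℝ) (hρ0 : ∀ x, 0 ≤ ρ x) (hρi : Integrable ρ)
    (dst : EuclideanSpace ℝ (Fin d) → EuclideanSpace ℝ (Fin d) → ℝ)
    (hdstc : Continuous fun p : EuclideanSpace ℝ (Fin d) × EuclideanSpace ℝ (Fin d) => dst p.1 p.2)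
    (hdst0 : ∀ x y, 0 ≤ dst x y)
    (y : Fin K → EuclideanSpace ℝ (Fin d)) (c : Fin K → ℝ)
    (w : Fin K → ℝ)
    (hcap : ∀ k, (∫ x in powerCell Ω dst y w k, ρ x) = c k) :
    ∀ w' : Fin K → ℝ,
      (∫ x in Ω, (⨅ j, (dst x (y j) - w' j)) * ρ x) + ∑ k, w' k * c k
        ≤ (∫ x in Ω, (⨅ j, (dst x (y j) - w j)) * ρ x) + ∑ k, w k * c k := by
  intro w'
  haveI : Nonempty (Fin K) := ⟨⟨0, hK⟩⟩
  set V : Fin K → Set (EuclideanSpace ℝ (Fin d)) := powerCell Ω dst y w with hVdef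
  have hdst_cont : ∀ j, Continuous fun x => dst x (y j) := fun j =>
    hdstc.comp (continuous_id.prodMk continuous_const)
  -- measurability of cells
  have hVm : ∀ k, MeasurableSet (V k) := by
    intro k
    have h1 : ∀ j : Fin K, MeasurableSet {x | dst x (y k) - w k ≤ dst x (y j) - w j} := fun j =>
      measurableSet_le ((hdst_cont k).sub continuous_const).measurable
        ((hdst_cont j).sub continuous_const).measurable
    have h2 : ∀ j : Fin K, MeasurableSet {x | dst x (y k) - w k < dst x (y j) - w j} := fun j =>
      measurableSet_lt ((hdst_cont k).sub continuous_const).measurable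
        ((hdst_cont j).sub continuous_const).measurable
    have he : V k = Ω ∩ ((⋂ j, {x | dst x (y k) - w k ≤ dst x (y j) - w j}) ∩
        ⋂ j, ⋂ _ : j < k, {x | dst x (y k) - w k < dst x (y j) - w j}) := by
      ext x
      simp only [hVdef, powerCell, Set.mem_setOf_eq, Set.mem_inter_iff, Set.mem_iInter]
    rw [he]
    exact hΩm.inter ((MeasurableSet.iInter h1).inter
      (MeasurableSet.iInter fun j => MeasurableSet.iInter fun _ => h2 j))
  have hVsub : ∀ k, V k ⊆ Ω := fun k x hx => hx.1
  -- cells cover Ω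
  have hcover : (⋃ k, V k) = Ω := by
    apply Set.Subset.antisymm (Set.iUnion_subset hVsub)
    intro x hx
    set val : Fin K → ℝ := fun j => dst x (y j) - w j with hval
    have hS : (Finset.univ.filter fun j : Fin K => ∀ i, val j ≤ val i).Nonempty := by
      obtain ⟨j, -, hj⟩ := Finset.exists_min_image Finset.univ val ⟨Classical.arbitrary _, Finset.mem_univ _⟩
      exact ⟨j, Finset.mem_filter.2 ⟨Finset.mem_univ _, fun i => hj i (Finset.mem_univ _)⟩⟩
    set k := (Finset.univ.filter fun j : Fin K => ∀ i, val j ≤ val i).min' hS with hkdef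
    have hk_mem := Finset.min'_mem _ hS
    have hk_min : ∀ i, val k ≤ val i := (Finset.mem_filter.1 hk_mem).2
    refine Set.mem_iUnion.2 ⟨k, hx, hk_min, fun j hj => ?_⟩
    by_contra hcon
    push_neg at hcon
    have hj_min : ∀ i, val j ≤ val i := fun i => le_trans hcon (hk_min i)
    have : k ≤ j := Finset.min'_le _ _ (Finset.mem_filter.2 ⟨Finset.mem_univ _, hj_min⟩)
    exact absurd this (not_le.2 hj)
  -- cells are pairwise disjoint
  have hdisj : Pairwise (Function.onFun Disjoint V) := by
    intro k l hkl
    refine Set.disjoint_left.2 fun x hxk hxl => ?_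
    rcases hkl.lt_or_gt with h | h
    · exact absurd (hxk.2.1 l) (not_le.2 (hxl.2.2 k h))
    · exact absurd (hxl.2.1 k) (not_le.2 (hxk.2.2 l h))
  -- uniform bound for dst on Ω
  obtain ⟨M, hM⟩ : ∃ M, ∀ x ∈ Ω, ∀ j, dst x (y j) ≤ M := by
    have hcomp : IsCompact ((closure Ω) ×ˢ Set.range y) :=
      hΩb.isCompact_closure.prod (Set.finite_range y).isCompact
    obtain ⟨M, hM⟩ := (hcomp.image hdstc).bddAbove
    exact ⟨M, fun x hx j => hM ⟨(x, y j), ⟨subset_closure hx, ⟨j, rfl⟩⟩, rfl⟩⟩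
  -- bound for the inf functions
  have hbound : ∀ (v : Fin K → ℝ) (x), x ∈ Ω →
      |⨅ j, dst x (y j) - v j| ≤ M + Finset.univ.sup' Finset.univ_nonempty (fun j => |v j|) := by
    intro v x hx
    set Mv := Finset.univ.sup' Finset.univ_nonempty (fun j => |v j|) with hMv
    have hMv0 : ∀ j, |v j| ≤ Mv := fun j => Finset.le_sup' (f := fun j => |v j|) (Finset.mem_univ j)
    have hM0 : 0 ≤ M := le_trans (hdst0 x (y ⟨0, hK⟩)) (hM x hx ⟨0, hK⟩)
    have hbdd : BddBelow (Set.range fun j => dst x (y j) - v j) :=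
      (Set.finite_range _).bddBelow
    rw [abs_le]
    constructor
    · refine le_ciInf fun j => ?_
      have h1 : -(v j) ≥ -Mv := neg_le_neg (le_trans (le_abs_self _) (hMv0 j))
      have := hdst0 x (y j)
      linarith
    · refine le_trans (ciInf_le hbdd (⟨0, hK⟩ : Fin K)) ?_
      have h1 := hM x hx ⟨0, hK⟩
      have h2 : -(v ⟨0, hK⟩) ≤ |v ⟨0, hK⟩| := neg_le_abs _
      have := hMv0 ⟨0, hK⟩
      linarith
  -- integrability machinery
  have hInt : ∀ (f : EuclideanSpace ℝ (Fin d) → ℝ) (C : ℝ), Measurable f →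
      (∀ x ∈ Ω, |f x| ≤ C) → IntegrableOn (fun x => f x * ρ x) Ω := by
    intro f C hfm hfC
    refine Integrable.mono' ((hρi.const_mul C).integrableOn)
      ((hfm.aemeasurable.mul hρi.aemeasurable).aestronglyMeasurable.restrict) ?_
    rw [ae_restrict_iff' hΩm]
    refine Filter.Eventually.of_forall fun x hx => ?_
    have : ‖f x * ρ x‖ = |f x| * ρ x := by
      rw [Real.norm_eq_abs, abs_mul, abs_of_nonneg (hρ0 x)]
    rw [this]
    exact mul_le_mul_of_nonneg_right (hfC x hx) (hρ0 x)
  have hMeasInf : ∀ v : Fin K → ℝ, Measurable fun x => ⨅ j, dst x (y j) - v j :=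
    fun v => Measurable.iInf fun j => ((hdst_cont j).sub continuous_const).measurable
  have hIw : IntegrableOn (fun x => (⨅ j, dst x (y j) - w j) * ρ x) Ω :=
    hInt _ _ (hMeasInf w) (hbound w)
  have hIw' : IntegrableOn (fun x => (⨅ j, dst x (y j) - w' j) * ρ x) Ω :=
    hInt _ _ (hMeasInf w') (hbound w')
  have hIdst : ∀ (v : Fin K → ℝ) (k : Fin K),
      IntegrableOn (fun x => (dst x (y k) - v k) * ρ x) Ω := by
    intro v k
    refine hInt _ (M + |v k|) ((hdst_cont k).sub continuous_const).measurable fun x hx => ?_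
    have h1 := hM x hx k
    have h2 := hdst0 x (y k)
    have h3 : 0 ≤ M := le_trans h2 h1
    have ha := le_abs_self (v k)
    have hb := neg_abs_le (v k)
    rw [abs_le]
    constructor <;> linarith
  -- splitting integrals over the cells
  have hsplit : ∀ g : EuclideanSpace ℝ (Fin d) → ℝ, IntegrableOn g Ω →
      ∫ x in Ω, g x = ∑ k, ∫ x in V k, g x := by
    intro g hg
    rw [← hcover] at hg ⊢
    rw [integral_iUnion hVm hdisj hg, tsum_fintype]
  -- pointwise facts on cells
  have hinf_eq : ∀ k, ∀ x ∈ V k, (⨅ j, dst x (y j) - w j) = dst x (y k) - w k := by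
    intro k x hx
    exact le_antisymm (ciInf_le (Set.finite_range _).bddBelow k) (le_ciInf hx.2.1)
  have hinf_le : ∀ (k) (x), (⨅ j, dst x (y j) - w' j) ≤ dst x (y k) - w' k :=
    fun k x => ciInf_le (Set.finite_range _).bddBelow k
  -- the chain of (in)equalities
  have hρV : ∀ k, IntegrableOn ρ (V k) := fun k => hρi.integrableOn.mono_set (hVsub k)
  calc (∫ x in Ω, (⨅ j, dst x (y j) - w' j) * ρ x) + ∑ k, w' k * c k
      = (∑ k, ∫ x in V k, (⨅ j, dst x (y j) - w' j) * ρ x) + ∑ k, w' k * c k := by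
        rw [hsplit _ hIw']
    _ ≤ (∑ k, ∫ x in V k, (dst x (y k) - w' k) * ρ x) + ∑ k, w' k * c k := by
        refine add_le_add (Finset.sum_le_sum fun k _ => ?_) le_rfl
        refine setIntegral_mono_on (hIw'.mono_set (hVsub k))
          ((hIdst w' k).mono_set (hVsub k)) (hVm k) fun x _ => ?_
        exact mul_le_mul_of_nonneg_right (hinf_le k x) (hρ0 x)
    _ = (∑ k, ((∫ x in V k, (dst x (y k) - w k) * ρ x) + (w k - w' k) * c k)) + ∑ k, w' k * c k := by
        congr 1
        refine Finset.sum_congr rfl fun k _ => ?_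
        have heq : ∀ x, (dst x (y k) - w' k) * ρ x
            = (dst x (y k) - w k) * ρ x + (w k - w' k) * ρ x := by
          intro x; ring
        rw [show (fun x => (dst x (y k) - w' k) * ρ x)
            = fun x => (dst x (y k) - w k) * ρ x + (w k - w' k) * ρ x from funext heq]
        rw [integral_add ((hIdst w k).mono_set (hVsub k)) ((hρV k).const_mul _),
          integral_const_mul, hcap k]
    _ = (∑ k, ∫ x in V k, (⨅ j, dst x (y j) - w j) * ρ x) + ∑ k, w k * c k := by
        rw [Finset.sum_add_distrib]
        have h1 : ∀ k : Fin K, (∫ x in V k, (dst x (y k) - w k) * ρ x)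
            = ∫ x in V k, (⨅ j, dst x (y j) - w j) * ρ x := by
          intro k
          refine setIntegral_congr_fun (hVm k) fun x hx => ?_
          rw [hinf_eq k x hx]
        rw [Finset.sum_congr rfl fun k _ => h1 k]
        have h2 : ∑ k, (w k - w' k) * c k + ∑ k, w' k * c k = ∑ k, w k * c k := by
          rw [← Finset.sum_add_distrib]
          exact Finset.sum_congr rfl fun k _ => by ring
        linarith [h2]
    _ = (∫ x in Ω, (⨅ j, dst x (y j) - w j) * ρ x) + ∑ k, w k * c k := by
        rw [hsplit _ hIw]
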